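/- Let F be a field, let a₀, a₁, a₂, c, f₀, f₁, f₂ be nonzero elements of F, and set q = a₀a₁a₂. Let R be the map fixing the a_i, sending c ↦ q^{-1}c^{-1} and f_i ↦ f_i^{-1}; let W₀ be the map fixing the a_i, sending c ↦ c^{-1} and f_i ↦ a_i a_{i+1}(a_{i-1}a_i + a_{i-1}f_i + f_{i-1}f_i)/(f_{i-1}(a_i a_{i+1} + a_i f_{i+1} + f_i f_{i+1})); and let W₁ be the map fixing the a_i, sending c ↦ q^{-2}c^{-1} and f_i ↦ (1 + a_i f_i + a_i a_{i+1} f_i f_{i+1})/(a_i a_{i+1} f_{i+1}(1 + a_{i-1}f_{i-1} + a_{i-1}a_i f_{i-1} f_i)) (indices mod 3). Then, whenever all intermediate denominators are nonzero, R ∘ W₀ = W₁ ∘ R on such tuples. (This is the relation r w₀ = w₁ r of the birational representation of W̃((A₂+A₁)^{(1)}).) -/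

import Mathlib

/-- The birational action of `r` of `W̃((A₂+A₁)⁽¹⁾)` on
`(a₀, a₁, a₂, c, f₀, f₁, f₂)`: it fixes the `aᵢ`, sends `c ↦ q⁻¹c⁻¹`
(where `q = a₀a₁a₂`) and `fᵢ ↦ fᵢ⁻¹`. -/
def weylR {F : Type*} [Field F] :
    F × F × F × F × F × F × F → F × F × F × F × F × F × F
  | (a0, a1, a2, c, f0, f1, f2) =>
    (a0, a1, a2, (a0 * a1 * a2)⁻¹ * c⁻¹, f0⁻¹, f1⁻¹, f2⁻¹)

/-- The birational action of `w₀` of `W̃((A₂+A₁)⁽¹⁾)`. -/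
def weylW0 {F : Type*} [Field F] :
    F × F × F × F × F × F × F → F × F × F × F × F × F × F
  | (a0, a1, a2, c, f0, f1, f2) =>
    (a0, a1, a2, c⁻¹,
      a0 * a1 * (a2 * a0 + a2 * f0 + f2 * f0) / (f2 * (a0 * a1 + a0 * f1 + f0 * f1)),
      a1 * a2 * (a0 * a1 + a0 * f1 + f0 * f1) / (f0 * (a1 * a2 + a1 * f2 + f1 * f2)),
      a2 * a0 * (a1 * a2 + a1 * f2 + f1 * f2) / (f1 * (a2 * a0 + a2 * f0 + f2 * f0)))

/-- The birational action of `w₁` of `W̃((A₂+A₁)⁽¹⁾)`: it fixes the `aᵢ`,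
sends `c ↦ q⁻²c⁻¹` (where `q = a₀a₁a₂`) and
`fᵢ ↦ (1 + aᵢfᵢ + aᵢa_{i+1}fᵢf_{i+1}) /
      (aᵢa_{i+1}f_{i+1}(1 + a_{i-1}f_{i-1} + a_{i-1}aᵢf_{i-1}fᵢ))`. -/
def weylW1 {F : Type*} [Field F] :
    F × F × F × F × F × F × F → F × F × F × F × F × F × F
  | (a0, a1, a2, c, f0, f1, f2) =>
    (a0, a1, a2, ((a0 * a1 * a2) ^ 2)⁻¹ * c⁻¹,
      (1 + a0 * f0 + a0 * a1 * f0 * f1) /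
        (a0 * a1 * f1 * (1 + a2 * f2 + a2 * a0 * f2 * f0)),
      (1 + a1 * f1 + a1 * a2 * f1 * f2) /
        (a1 * a2 * f2 * (1 + a0 * f0 + a0 * a1 * f0 * f1)),
      (1 + a2 * f2 + a2 * a0 * f2 * f0) /
        (a2 * a0 * f0 * (1 + a1 * f1 + a1 * a2 * f1 * f2)))

/-- Nonvanishing of the denominators appearing in `w₀`. -/
def denW0 {F : Type*} [Field F] (x : F × F × F × F × F × F × F) : Prop :=
  match x with
  | (a0, a1, a2, _, f0, f1, f2) =>
    f2 * (a0 * a1 + a0 * f1 + f0 * f1) ≠ 0 ∧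
    f0 * (a1 * a2 + a1 * f2 + f1 * f2) ≠ 0 ∧
    f1 * (a2 * a0 + a2 * f0 + f2 * f0) ≠ 0

/-- Nonvanishing of the denominators appearing in `w₁`. -/
def denW1 {F : Type*} [Field F] (x : F × F × F × F × F × F × F) : Prop :=
  match x with
  | (a0, a1, a2, _, f0, f1, f2) =>
    a0 * a1 * f1 * (1 + a2 * f2 + a2 * a0 * f2 * f0) ≠ 0 ∧
    a1 * a2 * f2 * (1 + a0 * f0 + a0 * a1 * f0 * f1) ≠ 0 ∧
    a2 * a0 * f0 * (1 + a1 * f1 + a1 * a2 * f1 * f2) ≠ 0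

/-- the relation `r w₀ = w₁ r` of the birational representation
of `W̃((A₂+A₁)⁽¹⁾)`. -/
theorem weylR_weylW0_eq_weylW1_weylR
    (F : Type*) [Field F] (a0 a1 a2 c f0 f1 f2 : F)
    (ha0 : a0 ≠ 0) (ha1 : a1 ≠ 0) (ha2 : a2 ≠ 0) (hc : c ≠ 0)
    (hf0 : f0 ≠ 0) (hf1 : f1 ≠ 0) (hf2 : f2 ≠ 0)
    (h1 : denW0 (a0, a1, a2, c, f0, f1, f2))
    (h2 : denW1 (weylR (a0, a1, a2, c, f0, f1, f2))) :
    weylR (weylW0 (a0, a1, a2, c, f0, f1, f2)) =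
      weylW1 (weylR (a0, a1, a2, c, f0, f1, f2)) := by
  simp only [weylR, weylW0, weylW1, denW0, denW1] at *
  obtain ⟨d1, d2, d3⟩ := h1
  obtain ⟨e1, e2, e3⟩ := h2
  simp only [Prod.mk.injEq]
  have n1 := right_ne_zero_of_mul d1
  have n2 := right_ne_zero_of_mul d2
  have n3 := right_ne_zero_of_mul d3
  refine ⟨trivial, trivial, trivial, by field_simp, ?_, ?_, ?_⟩ <;>
  · rw [inv_div, div_eq_div_iff
      (mul_ne_zero (mul_ne_zero (by assumption) (by assumption)) (by assumption))
      (by assumption)]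
    field_simp
    ring
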